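/- (Theorem 2: slant helix equivalence) Let α : ℝ → ℝ³ be a twice continuously differentiable unit-speed curve with unit tangent T(s) = α′(s), curvature κ(s) = ‖α″(s)‖ > 0, principal normal N(s) = α″(s)/κ(s), and binormal B(s) = T(s) × N(s). Let θ ∈ ℝ with sin θ > 0, and suppose a ∈ ℝ³ satisfies a = cos θ · T(s) + sin θ · B(s) for all s. For s₀ ∈ ℝ define ᾱ(s) = α(s₀) + sin θ · α(s) + (s − s₀) cos θ · a, with principal normal N̄(s) = B̄(s) × T̄(s), where T̄ = ᾱ′/‖ᾱ′‖ and B̄ = (ᾱ′ × ᾱ″)/‖ᾱ′ × ᾱ″‖. Then α is a slant helix if and only if ᾱ is a slant helix: for any fixed unit vector d ∈ ℝ³, the function s ↦ ⟪N(s), d⟫ is constant if and only if s ↦ ⟪N̄(s), d⟫ is constant. -/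

import Mathlib

open Real RealInnerProductSpace

noncomputable def cross3 (u v : EuclideanSpace ℝ (Fin 3)) : EuclideanSpace ℝ (Fin 3) :=
  WithLp.toLp 2 ![u 1 * v 2 - u 2 * v 1, u 2 * v 0 - u 0 * v 2, u 0 * v 1 - u 1 * v 0]

lemma inner3 (x y : EuclideanSpace ℝ (Fin 3)) : ⟪x, y⟫ = x 0 * y 0 + x 1 * y 1 + x 2 * y 2 := by
  simp [PiLp.inner_apply, RCLike.inner_apply, Fin.sum_univ_three]
  ring

lemma cross3_apply (u v : EuclideanSpace ℝ (Fin 3)) (i : Fin 3) :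
    cross3 u v i = ![u 1 * v 2 - u 2 * v 1, u 2 * v 0 - u 0 * v 2, u 0 * v 1 - u 1 * v 0] i := rfl

lemma cross3_triple (u v w : EuclideanSpace ℝ (Fin 3)) :
    cross3 (cross3 u v) w = ⟪u, w⟫ • v - ⟪v, w⟫ • u := by
  ext i
  fin_cases i <;>
    simp [cross3_apply, inner3, Fin.sum_univ_three, PiLp.smul_apply, PiLp.sub_apply,
      smul_eq_mul] <;> ring

lemma cross3_smul_left (c : ℝ) (u v : EuclideanSpace ℝ (Fin 3)) :
    cross3 (c • u) v = c • cross3 u v := by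
  ext i
  fin_cases i <;> simp [cross3_apply, PiLp.smul_apply, smul_eq_mul] <;> ring

lemma cross3_smul_right (c : ℝ) (u v : EuclideanSpace ℝ (Fin 3)) :
    cross3 u (c • v) = c • cross3 u v := by
  ext i
  fin_cases i <;> simp [cross3_apply, PiLp.smul_apply, smul_eq_mul] <;> ring

lemma cross3_add_left (u v w : EuclideanSpace ℝ (Fin 3)) :
    cross3 (u + v) w = cross3 u w + cross3 v w := by
  ext i
  fin_cases i <;> simp [cross3_apply, PiLp.add_apply] <;> ring

lemma cross3_add_right (u v w : EuclideanSpace ℝ (Fin 3)) :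
    cross3 u (v + w) = cross3 u v + cross3 u w := by
  ext i
  fin_cases i <;> simp [cross3_apply, PiLp.add_apply] <;> ring

lemma cross3_sub_left (u v w : EuclideanSpace ℝ (Fin 3)) :
    cross3 (u - v) w = cross3 u w - cross3 v w := by
  ext i
  fin_cases i <;> simp [cross3_apply, PiLp.sub_apply] <;> ring

lemma cross3_self (u : EuclideanSpace ℝ (Fin 3)) : cross3 u u = 0 := by
  ext i
  fin_cases i <;> simp [cross3_apply] <;> ring

lemma cross3_anticomm (u v : EuclideanSpace ℝ (Fin 3)) : cross3 u v = -cross3 v u := by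
  ext i
  fin_cases i <;> simp [cross3_apply, PiLp.neg_apply] <;> ring

lemma inner_cross3_self (u v : EuclideanSpace ℝ (Fin 3)) :
    ⟪cross3 u v, cross3 u v⟫ = ⟪u, u⟫ * ⟪v, v⟫ - ⟪u, v⟫ ^ 2 := by
  simp only [inner3, cross3_apply]
  simp
  ring

lemma inner_cross3_left (u v : EuclideanSpace ℝ (Fin 3)) : ⟪u, cross3 u v⟫ = 0 := by
  simp only [inner3, cross3_apply]
  simp
  ring

lemma inner_cross3_right (u v : EuclideanSpace ℝ (Fin 3)) : ⟪v, cross3 u v⟫ = 0 := by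
  simp only [inner3, cross3_apply]
  simp
  ring

theorem slant_helix_iff_associated_slant_helix
    (α : ℝ → EuclideanSpace ℝ (Fin 3))
    (hα : ContDiff ℝ 2 α)
    (T N B : ℝ → EuclideanSpace ℝ (Fin 3)) (κ : ℝ → ℝ)
    (hT : ∀ s, T s = deriv α s)
    (hunit : ∀ s, ‖deriv α s‖ = 1)
    (hκ : ∀ s, κ s = ‖deriv (deriv α) s‖)
    (hκpos : ∀ s, 0 < κ s)
    (hN : ∀ s, N s = (κ s)⁻¹ • deriv (deriv α) s)
    (hB : ∀ s, B s = cross3 (T s) (N s))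
    (θ : ℝ) (hθ : 0 < Real.sin θ)
    (a : EuclideanSpace ℝ (Fin 3))
    (ha : ∀ s, a = Real.cos θ • T s + Real.sin θ • B s)
    (s₀ : ℝ)
    (ᾱ : ℝ → EuclideanSpace ℝ (Fin 3))
    (hᾱ : ∀ s, ᾱ s = α s₀ + Real.sin θ • α s + ((s - s₀) * Real.cos θ) • a)
    (T' B' N' : ℝ → EuclideanSpace ℝ (Fin 3))
    (hT' : ∀ s, T' s = ‖deriv ᾱ s‖⁻¹ • deriv ᾱ s)
    (hB' : ∀ s, B' s = ‖cross3 (deriv ᾱ s) (deriv (deriv ᾱ) s)‖⁻¹ •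
        cross3 (deriv ᾱ s) (deriv (deriv ᾱ) s))
    (hN' : ∀ s, N' s = cross3 (B' s) (T' s)) :
    ∀ d : EuclideanSpace ℝ (Fin 3), ‖d‖ = 1 →
      ((∃ c : ℝ, ∀ s, ⟪N s, d⟫ = c) ↔ (∃ c : ℝ, ∀ s, ⟪N' s, d⟫ = c)) := by
  -- differentiability
  have h2 : ContDiff ℝ ((1 : ℕ∞) + 1) α := by convert hα using 2; norm_num
  have h3 := contDiff_succ_iff_deriv.mp h2
  have hαd : Differentiable ℝ α := h3.1
  have hα'd : Differentiable ℝ (deriv α) := h3.2.2.differentiable (by norm_num)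
  -- first derivative of ᾱ
  have hfun : ᾱ = fun s => α s₀ + Real.sin θ • α s + ((s - s₀) * Real.cos θ) • a := funext hᾱ
  have h1 : ∀ s, HasDerivAt ᾱ (Real.sin θ • deriv α s + Real.cos θ • a) s := by
    intro s
    rw [hfun]
    have ha1 : HasDerivAt (fun s => Real.sin θ • α s) (Real.sin θ • deriv α s) s :=
      ((hαd s).hasDerivAt).const_smul (Real.sin θ)
    have ha2 : HasDerivAt (fun s : ℝ => ((s - s₀) * Real.cos θ) • a) (Real.cos θ • a) s := by
      have h : HasDerivAt (fun s : ℝ => (s - s₀) * Real.cos θ) (Real.cos θ) s := by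
        simpa using ((hasDerivAt_id s).sub_const s₀).mul_const (Real.cos θ)
      simpa using h.smul_const a
    simpa [add_assoc] using ((ha1.add ha2).const_add (α s₀))
  have hd1 : ∀ s, deriv ᾱ s = Real.sin θ • deriv α s + Real.cos θ • a := fun s => (h1 s).deriv
  -- second derivative of ᾱ
  have hd2 : ∀ s, deriv (deriv ᾱ) s = Real.sin θ • deriv (deriv α) s := by
    intro s
    have hfun2 : deriv ᾱ = fun s => Real.sin θ • deriv α s + Real.cos θ • a := funext hd1
    rw [hfun2]
    have : HasDerivAt (fun s => Real.sin θ • deriv α s + Real.cos θ • a)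
        (Real.sin θ • deriv (deriv α) s) s := by
      simpa using (((hα'd s).hasDerivAt).const_smul (Real.sin θ)).add_const (Real.cos θ • a)
    exact this.deriv
  -- orthogonality of α' and α''
  have horth : ∀ s, ⟪deriv α s, deriv (deriv α) s⟫ = 0 := by
    intro s
    have hc : (fun s => ⟪deriv α s, deriv α s⟫) = fun _ => (1 : ℝ) := by
      funext t
      rw [real_inner_self_eq_norm_sq, hunit t]; norm_num
    have h := ((hα'd s).hasDerivAt).inner ℝ ((hα'd s).hasDerivAt)
    rw [hc] at h
    have h0 := h.unique (hasDerivAt_const s (1 : ℝ))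
    rw [real_inner_comm] at h0
    rw [real_inner_comm]
    linarith
  -- scalars
  set p : ℝ := Real.sin θ + Real.cos θ ^ 2 with hp
  set q : ℝ := Real.sin θ * Real.cos θ with hq
  have hppos : 0 < p := add_pos_of_pos_of_nonneg hθ (sq_nonneg _)
  have hpq : 0 < p ^ 2 + q ^ 2 := by positivity
  set m : ℝ := Real.sqrt (p ^ 2 + q ^ 2) with hm
  have hmpos : 0 < m := Real.sqrt_pos.mpr hpq
  have hmm : m * m = p ^ 2 + q ^ 2 := Real.mul_self_sqrt hpq.le
  -- the key pointwise identity
  have key : ∀ s, N' s = N s := by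
    intro s
    set u := deriv α s with hu
    set w := deriv (deriv α) s with hw
    set k := κ s with hk
    have hkpos : 0 < k := hκpos s
    have hwk : ‖w‖ = k := (hκ s).symm
    set n := N s with hn
    have hns : n = k⁻¹ • w := hN s
    have hwn : w = k • n := by
      rw [hns, smul_smul, mul_inv_cancel₀ hkpos.ne', one_smul]
    have huu : ⟪u, u⟫ = 1 := by
      rw [real_inner_self_eq_norm_sq, hunit s]; norm_num
    have hun : ⟪u, n⟫ = 0 := by
      rw [hns, real_inner_smul_right, horth s, mul_zero]
    have hnn : ⟪n, n⟫ = 1 := by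
      rw [hns, real_inner_smul_left, real_inner_smul_right, real_inner_self_eq_norm_sq, hwk]
      field_simp
    set b := cross3 u n with hb
    have hbb : ⟪b, b⟫ = 1 := by
      rw [hb, inner_cross3_self, huu, hnn, hun]; norm_num
    have hub : ⟪u, b⟫ = 0 := inner_cross3_left u n
    have hnb : ⟪n, b⟫ = 0 := inner_cross3_right u n
    -- rewrite a
    have ha' : a = Real.cos θ • u + Real.sin θ • b := by
      rw [ha s, hB s, hT s, ← hu, ← hn, ← hb]
    -- first derivative in the frame
    have hd1' : deriv ᾱ s = p • u + q • b := by
      rw [hd1 s, ha', ← hu, hp, hq]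
      module
    -- second derivative in the frame
    have hd2' : deriv (deriv ᾱ) s = (Real.sin θ * k) • n := by
      rw [hd2 s, ← hw, hwn, smul_smul]
    -- cross products in the frame
    have hbn : cross3 b n = -u := by
      rw [hb, cross3_triple, hun, hnn]; module
    have hnu : ⟪n, u⟫ = 0 := by rw [real_inner_comm]; exact hun
    have hbu : cross3 b u = n := by
      rw [hb, cross3_triple, huu, hnu]; module
    have hub' : cross3 u b = -n := by
      rw [cross3_anticomm u b, hbu]
    have hcross : cross3 (deriv ᾱ s) (deriv (deriv ᾱ) s) =
        (Real.sin θ * k) • (p • b - q • u) := by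
      rw [hd1', hd2', cross3_smul_right, cross3_add_left, cross3_smul_left, cross3_smul_left,
        ← hb, hbn]
      module
    -- norms
    have hsk : 0 < Real.sin θ * k := mul_pos hθ hkpos
    have hnorm1 : ‖p • b - q • u‖ = m := by
      rw [@norm_eq_sqrt_real_inner, hm]
      congr 1
      rw [inner_sub_left, inner_sub_right, inner_sub_right, real_inner_smul_left,
        real_inner_smul_left, real_inner_smul_left, real_inner_smul_left,
        real_inner_smul_right, real_inner_smul_right, real_inner_smul_right,
        real_inner_smul_right, hbb, huu, hub, real_inner_comm u b, hub]
      ring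
    have hnorm2 : ‖p • u + q • b‖ = m := by
      rw [@norm_eq_sqrt_real_inner, hm]
      congr 1
      rw [inner_add_left, inner_add_right, inner_add_right, real_inner_smul_left,
        real_inner_smul_left, real_inner_smul_left, real_inner_smul_left,
        real_inner_smul_right, real_inner_smul_right, real_inner_smul_right,
        real_inner_smul_right, hbb, huu, hub, real_inner_comm u b, hub]
      ring
    have hB's : B' s = m⁻¹ • (p • b - q • u) := by
      rw [hB' s, hcross, norm_smul, Real.norm_eq_abs, abs_of_pos hsk, hnorm1, smul_smul]
      congr 1
      field_simp
    have hT's : T' s = m⁻¹ • (p • u + q • b) := by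
      rw [hT' s, hd1', hnorm2]
    -- conclude
    rw [hN' s, hB's, hT's, cross3_smul_left, cross3_smul_right]
    have hc2 : cross3 (p • b - q • u) (p • u + q • b) = (p ^ 2 + q ^ 2) • n := by
      simp only [cross3_sub_left, cross3_add_right, cross3_smul_left, cross3_smul_right,
        cross3_self, hbu, hub', smul_zero, smul_neg, smul_smul]
      module
    rw [hc2, smul_smul, smul_smul]
    have hm0 : m ≠ 0 := hmpos.ne'
    have : m⁻¹ * m⁻¹ * (p ^ 2 + q ^ 2) = 1 := by
      rw [← hmm]; field_simp
    rw [this, one_smul]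
  intro d _
  constructor
  · rintro ⟨c, hc⟩
    exact ⟨c, fun s => by rw [key s]; exact hc s⟩
  · rintro ⟨c, hc⟩
    exact ⟨c, fun s => by rw [← key s]; exact hc s⟩
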